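/- Let (V_•, d) be a cochain complex of finite-dimensional inner product spaces that is exact at level k−1 and level k. Then for each u ∈ V_k there exists a unique pair (σ, w) ∈ V_{k-1} × V_k solving the discrete Hodge-Laplace-type system: ⟨σ, τ⟩ − ⟨w, dτ⟩ = 0 for all τ ∈ V_{k-1}, and ⟨dσ, v⟩ + ⟨dw, dv⟩ = ⟨du, dv⟩ for all v ∈ V_k; moreover σ = 0 in this solution. -/

import Mathlib

open scoped RealInnerProductSpace

/-- Let `V_{k-2} →^{d₀} V_{k-1} →^{d₁} V_k →^{d₂} V_{k+1}` be a cochain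
complex of finite-dimensional real inner product spaces, exact at level `k-1`
(`ker d₁ = range d₀`) and at level `k` (`ker d₂ = range d₁`).  Then for each `u ∈ V_k`
there is a unique pair `(σ, w) ∈ V_{k-1} × V_k` solving the discrete
Hodge-Laplace-type system
`⟨σ, τ⟩ − ⟨w, d₁τ⟩ = 0` for all `τ ∈ V_{k-1}`, and
`⟨d₁σ, v⟩ + ⟨d₂w, d₂v⟩ = ⟨d₂u, d₂v⟩` for all `v ∈ V_k`;
moreover `σ = 0` in this solution. -/
theorem hodge_laplace_system_wellposed
    {U0 U1 U2 U3 : Type*}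
    [NormedAddCommGroup U0] [InnerProductSpace ℝ U0] [FiniteDimensional ℝ U0]
    [NormedAddCommGroup U1] [InnerProductSpace ℝ U1] [FiniteDimensional ℝ U1]
    [NormedAddCommGroup U2] [InnerProductSpace ℝ U2] [FiniteDimensional ℝ U2]
    [NormedAddCommGroup U3] [InnerProductSpace ℝ U3] [FiniteDimensional ℝ U3]
    (d₀ : U0 →ₗ[ℝ] U1) (d₁ : U1 →ₗ[ℝ] U2) (d₂ : U2 →ₗ[ℝ] U3)
    (hc1 : d₁.comp d₀ = 0) (hc2 : d₂.comp d₁ = 0)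
    (hexact1 : LinearMap.ker d₁ = LinearMap.range d₀)
    (hexact2 : LinearMap.ker d₂ = LinearMap.range d₁)
    (u : U2) :
    (∃! p : U1 × U2,
        (∀ τ : U1, ⟪p.1, τ⟫ - ⟪p.2, d₁ τ⟫ = 0) ∧
        (∀ v : U2, ⟪d₁ p.1, v⟫ + ⟪d₂ p.2, d₂ v⟫ = ⟪d₂ u, d₂ v⟫)) ∧
    (∀ p : U1 × U2,
        ((∀ τ : U1, ⟪p.1, τ⟫ - ⟪p.2, d₁ τ⟫ = 0) ∧
         (∀ v : U2, ⟪d₁ p.1, v⟫ + ⟪d₂ p.2, d₂ v⟫ = ⟪d₂ u, d₂ v⟫)) → p.1 = 0) := by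
  classical
  set K : Submodule ℝ U2 := LinearMap.ker d₂ with hK
  -- every solution has σ = 0
  have key : ∀ p : U1 × U2,
      ((∀ τ : U1, ⟪p.1, τ⟫ - ⟪p.2, d₁ τ⟫ = 0) ∧
       (∀ v : U2, ⟪d₁ p.1, v⟫ + ⟪d₂ p.2, d₂ v⟫ = ⟪d₂ u, d₂ v⟫)) → p.1 = 0 := by
    rintro ⟨σ, w⟩ ⟨h1, h2⟩
    have hd1σ : d₁ σ = 0 := by
      have h := h2 (d₁ σ)
      have hz : d₂ (d₁ σ) = 0 := by
        have := LinearMap.congr_fun hc2 σ; simpa using this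
      rw [hz] at h
      simp only [inner_zero_right, add_zero] at h
      exact inner_self_eq_zero.mp h
    have hσσ : (⟪σ, σ⟫ : ℝ) = 0 := by
      have h := h1 σ
      rw [hd1σ] at h
      simpa using h
    exact inner_self_eq_zero.mp hσσ
  -- properties of solutions: w ⊥ K and d₂ w = d₂ u
  have sol_props : ∀ p : U1 × U2,
      ((∀ τ : U1, ⟪p.1, τ⟫ - ⟪p.2, d₁ τ⟫ = 0) ∧
       (∀ v : U2, ⟪d₁ p.1, v⟫ + ⟪d₂ p.2, d₂ v⟫ = ⟪d₂ u, d₂ v⟫)) →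
      p.2 ∈ Kᗮ ∧ d₂ p.2 = d₂ u := by
    rintro ⟨σ, w⟩ hp
    obtain ⟨h1, h2⟩ := hp
    have hσ : σ = 0 := key (σ, w) ⟨h1, h2⟩
    subst hσ
    constructor
    · intro x hx
      rw [hexact2] at hx
      obtain ⟨τ, rfl⟩ := hx
      have h := h1 τ
      simp only [inner_zero_left, zero_sub, neg_eq_zero] at h
      rw [real_inner_comm]
      exact h
    · have h := h2 (w - u)
      simp only [map_zero, inner_zero_left, zero_add, map_sub] at h
      have : (⟪d₂ w - d₂ u, d₂ w - d₂ u⟫ : ℝ) = 0 := by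
        rw [inner_sub_left]; linarith
      have := inner_self_eq_zero.mp this
      have := sub_eq_zero.mp this
      exact this
  -- the candidate solution
  
  set w₀ : U2 := u - (Submodule.orthogonalProjectionOnto K u : U2) with hw₀
  have hw₀mem : w₀ ∈ Kᗮ := Submodule.sub_starProjection_mem_orthogonal (K := K) u
  have hdw₀ : d₂ w₀ = d₂ u := by
    have hmem : ((Submodule.orthogonalProjectionOnto K u : U2)) ∈ K := (Submodule.orthogonalProjectionOnto K u).2
    have : d₂ ((Submodule.orthogonalProjectionOnto K u : U2)) = 0 := hmem
    rw [hw₀, map_sub, this, sub_zero]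
  have hsol : (∀ τ : U1, ⟪((0 : U1), w₀).1, τ⟫ - ⟪((0 : U1), w₀).2, d₁ τ⟫ = 0) ∧
      (∀ v : U2, ⟪d₁ ((0 : U1), w₀).1, v⟫ + ⟪d₂ ((0 : U1), w₀).2, d₂ v⟫ = ⟪d₂ u, d₂ v⟫) := by
    constructor
    · intro τ
      have hmem : d₁ τ ∈ K := by
        rw [hexact2]; exact ⟨τ, rfl⟩
      have : (⟪w₀, d₁ τ⟫ : ℝ) = 0 := by
        rw [real_inner_comm]; exact hw₀mem _ hmem
      simp [this]
    · intro v
      simp [hdw₀]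
  refine ⟨⟨((0 : U1), w₀), hsol, ?_⟩, key⟩
  rintro ⟨σ, w⟩ hp
  obtain ⟨hwperp, hdw⟩ := sol_props (σ, w) hp
  have hσ : σ = 0 := key (σ, w) hp
  have hwK : w - w₀ ∈ K := by
    show d₂ (w - w₀) = 0
    rw [map_sub, hdw, hdw₀, sub_self]
  have hwperp' : w - w₀ ∈ Kᗮ := Submodule.sub_mem _ hwperp hw₀mem
  have : w - w₀ = 0 := by
    have := Submodule.inner_right_of_mem_orthogonal hwK hwperp'
    exact inner_self_eq_zero.mp this
  have hw : w = w₀ := sub_eq_zero.mp this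
  simp [hσ, hw]
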